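/- Fix a prime p ≥ 5 and a prime l ≠ p with l ≥ 5. The number of pairs (A, B) ∈ (ℤ/l^{p+1}ℤ)² such that (A, B) mod l ≠ (0,0), l^p divides 4A³ + 27B², and l^{p+1} does not divide 4A³ + 27B², equals l^p (l − 1)². -/
import Mathlib


open Finset

-- auxiliary lemmas

lemma countA (l k : ℕ) (hl : l.Prime) (hl5 : 5 ≤ l) (hk : 0 < k) :
    ((Finset.range (l ^ k) ×ˢ Finset.range (l ^ k)).filter fun AB =>
      ¬ (l ∣ AB.1 ∧ l ∣ AB.2) ∧ l ^ k ∣ (4 * AB.1 ^ 3 + 27 * AB.2 ^ 2)).card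
      = l ^ (k - 1) * (l - 1) := by
  haveI : NeZero (l ^ k) := ⟨pow_ne_zero _ hl.pos.ne'⟩
  have hl2 : l ≠ 2 := by omega
  have hl3 : l ≠ 3 := by omega
  have h2 : IsUnit (2 : ZMod (l ^ k)) := by
    rw [show ((2 : ZMod (l^k))) = ((2 : ℕ) : ZMod (l^k)) by norm_num,
      ZMod.isUnit_iff_coprime]
    exact (Nat.Coprime.pow_right _ ((Nat.coprime_primes Nat.prime_two hl).mpr (Ne.symm hl2)))
  have h3 : IsUnit (3 : ZMod (l ^ k)) := by
    rw [show ((3 : ZMod (l^k))) = ((3 : ℕ) : ZMod (l^k)) by norm_num,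
      ZMod.isUnit_iff_coprime]
    exact (Nat.Coprime.pow_right _ ((Nat.coprime_primes Nat.prime_three hl).mpr (Ne.symm hl3)))
  have hdvd_lk : l ∣ l ^ k := dvd_pow_self l hk.ne'
  have hunit_iff : ∀ A : ℕ, IsUnit ((A : ℕ) : ZMod (l ^ k)) ↔ ¬ l ∣ A := by
    intro A
    rw [ZMod.isUnit_iff_coprime, Nat.coprime_pow_right_iff hk,
      Nat.coprime_comm, hl.coprime_iff_not_dvd]
  have hvalndvd : ∀ x : ZMod (l ^ k), IsUnit x → ¬ l ∣ x.val := by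
    intro x hx hdvd
    have hcop := ZMod.val_coe_unit_coprime hx.unit
    rw [hx.unit_spec] at hcop
    have : l ∣ 1 := hcop ▸ Nat.dvd_gcd hdvd hdvd_lk
    have := Nat.le_of_dvd one_pos this
    omega
  -- cast equals zero iff dvd, and casting val back
  have hcastval : ∀ x : ZMod (l ^ k), ((x.val : ℕ) : ZMod (l ^ k)) = x := fun x => by
    rw [ZMod.natCast_val, ZMod.cast_id]
  rw [show l ^ (k-1) * (l-1) = Nat.totient (l ^ k) from (Nat.totient_prime_pow hl hk).symm,
    ← ZMod.card_units_eq_totient (l ^ k), ← Finset.card_univ]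
  symm
  apply Finset.card_bij
    (fun (u : (ZMod (l ^ k))ˣ) _ =>
      (((-3 : ZMod (l^k)) * (u : ZMod (l^k))^2).val, ((2 : ZMod (l^k)) * (u : ZMod (l^k))^3).val))
  · intro u _
    simp only [Finset.mem_filter, Finset.mem_product, Finset.mem_range]
    refine ⟨⟨ZMod.val_lt _, ZMod.val_lt _⟩, ?_, ?_⟩
    · rintro ⟨hA, -⟩
      exact hvalndvd _ ((h3.neg.mul (u.isUnit.pow 2))) (by simpa using hA)
    · rw [← ZMod.natCast_eq_zero_iff]
      push_cast
      rw [hcastval, hcastval]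
      ring
  · intro u _ v _ h
    have h1 : (-3 : ZMod (l^k)) * (u : ZMod (l^k))^2 = -3 * (v : ZMod (l^k))^2 :=
      ZMod.val_injective _ (congrArg Prod.fst h)
    have h2' : (2 : ZMod (l^k)) * (u : ZMod (l^k))^3 = 2 * (v : ZMod (l^k))^3 :=
      ZMod.val_injective _ (congrArg Prod.snd h)
    have hu2 : (u : ZMod (l^k))^2 = (v : ZMod (l^k))^2 :=
      h3.neg.mul_left_cancel (by linear_combination h1)
    have hu3 : (u : ZMod (l^k))^3 = (v : ZMod (l^k))^3 :=
      h2.mul_left_cancel h2'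
    have : u^2 = v^2 := Units.ext (by push_cast [hu2]; ring)
    have h3' : u^3 = v^3 := Units.ext (by push_cast [hu3]; ring)
    have e2 : u ^ 2 = v ^ 2 := ‹u^2 = v^2›
    calc u = u^3 * (u^2)⁻¹ := by group
      _ = v^3 * (v^2)⁻¹ := by rw [h3', e2]
      _ = v := by group
  · rintro ⟨A, B⟩ hAB
    simp only [Finset.mem_filter, Finset.mem_product, Finset.mem_range] at hAB
    obtain ⟨⟨hAlt, hBlt⟩, hcond, hdvd⟩ := hAB
    set a : ZMod (l^k) := (A : ZMod (l^k)) with ha_def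
    set b : ZMod (l^k) := (B : ZMod (l^k)) with hb_def
    have heq : 4 * a ^ 3 + 27 * b ^ 2 = 0 := by
      rw [ha_def, hb_def]
      push_cast [← ZMod.natCast_eq_zero_iff] at hdvd ⊢
      exact_mod_cast hdvd
    -- l ∤ A and l ∤ B
    have hldvdf : l ∣ 4 * A ^ 3 + 27 * B ^ 2 := hdvd_lk.trans hdvd
    have hlA : ¬ l ∣ A := by
      intro hA
      apply hcond
      refine ⟨hA, ?_⟩
      have h4 : l ∣ 4 * A ^ 3 := Dvd.dvd.mul_left (hA.trans (dvd_pow_self A (by norm_num))) 4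
      have h27 : l ∣ 27 * B ^ 2 := by
        have := Nat.dvd_sub hldvdf h4
        rwa [Nat.add_sub_cancel_left] at this
      rcases (Nat.Prime.dvd_mul hl).mp h27 with h | h
      · have : l ∣ 3 := hl.dvd_of_dvd_pow ((by norm_num : (27:ℕ) = 3^3) ▸ h)
        have := Nat.le_of_dvd (by norm_num) this
        omega
      · exact hl.dvd_of_dvd_pow h
    have hlB : ¬ l ∣ B := by
      intro hB
      apply hcond
      refine ⟨?_, hB⟩
      have h27 : l ∣ 27 * B ^ 2 := Dvd.dvd.mul_left (hB.trans (dvd_pow_self B (by norm_num))) 27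
      have h4 : l ∣ 4 * A ^ 3 := by
        have := Nat.dvd_sub hldvdf h27
        rwa [Nat.add_sub_cancel] at this
      rcases (Nat.Prime.dvd_mul hl).mp h4 with h | h
      · have := Nat.le_of_dvd (by norm_num) h
        omega
      · exact hl.dvd_of_dvd_pow h
    have ha : IsUnit a := (hunit_iff A).mpr hlA
    have hb : IsUnit b := (hunit_iff B).mpr hlB
    have h2a : IsUnit ((2 : ZMod (l^k)) * a) := h2.mul ha
    set w := h2a.unit with hw_def
    set x : ZMod (l^k) := ((w⁻¹ : (ZMod (l^k))ˣ) : ZMod (l^k)) with hx_def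
    have hx : x * (2 * a) = 1 := by
      rw [hx_def, ← h2a.unit_spec]
      exact w.inv_mul
    set t : ZMod (l^k) := (-3) * b * x with ht_def
    have htu : IsUnit t := (h3.neg.mul hb).mul (w⁻¹).isUnit
    have hta : (-3 : ZMod (l^k)) * t^2 = a := by
      apply (h2a.pow 2).mul_right_cancel
      rw [ht_def]
      linear_combination (-(1 : ZMod (l^k))) * heq - 27*b^2*(2*a*x+1) * hx
    have htb : (2 : ZMod (l^k)) * t^3 = b := by
      apply (h2a.pow 3).mul_right_cancel
      rw [ht_def]
      linear_combination (-2*b) * heq - 54*b^3*((2*a*x)^2+2*a*x+1) * hx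
    refine ⟨htu.unit, Finset.mem_univ _, ?_⟩
    rw [htu.unit_spec, hta, htb, ha_def, hb_def,
      ZMod.val_cast_of_lt hAlt, ZMod.val_cast_of_lt hBlt]


lemma countB (p l : ℕ) (hl : l.Prime) (hp0 : 0 < p) :
    ((Finset.range (l ^ (p+1)) ×ˢ Finset.range (l ^ (p+1))).filter fun AB =>
      ¬ (l ∣ AB.1 ∧ l ∣ AB.2) ∧ l ^ p ∣ (4 * AB.1 ^ 3 + 27 * AB.2 ^ 2)).card
    = l ^ 2 * ((Finset.range (l ^ p) ×ˢ Finset.range (l ^ p)).filter fun AB =>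
      ¬ (l ∣ AB.1 ∧ l ∣ AB.2) ∧ l ^ p ∣ (4 * AB.1 ^ 3 + 27 * AB.2 ^ 2)).card := by
  haveI : NeZero (l ^ p) := ⟨pow_ne_zero _ hl.pos.ne'⟩
  have hlp : 0 < l ^ p := pow_pos hl.pos p
  have hdvd_lp : l ∣ l ^ p := dvd_pow_self l hp0.ne'
  have hmodiff : ∀ A B : ℕ, (l ^ p ∣ 4 * (A % l^p) ^ 3 + 27 * (B % l^p) ^ 2 ↔
      l ^ p ∣ 4 * A ^ 3 + 27 * B ^ 2) := by
    intro A B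
    rw [← ZMod.natCast_eq_zero_iff, ← ZMod.natCast_eq_zero_iff]
    constructor <;> intro h <;> [skip; skip] <;>
    · rw [show ((4 * (A % l^p) ^ 3 + 27 * (B % l^p) ^ 2 : ℕ) : ZMod (l^p)) =
        ((4 * A ^ 3 + 27 * B ^ 2 : ℕ) : ZMod (l^p)) by
          push_cast [ZMod.natCast_mod]; ring] at *
      exact h
  rw [show l ^ 2 * ((Finset.range (l ^ p) ×ˢ Finset.range (l ^ p)).filter fun AB =>
      ¬ (l ∣ AB.1 ∧ l ∣ AB.2) ∧ l ^ p ∣ (4 * AB.1 ^ 3 + 27 * AB.2 ^ 2)).card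
    = (((Finset.range (l ^ p) ×ˢ Finset.range (l ^ p)).filter fun AB =>
      ¬ (l ∣ AB.1 ∧ l ∣ AB.2) ∧ l ^ p ∣ (4 * AB.1 ^ 3 + 27 * AB.2 ^ 2)) ×ˢ
      (Finset.range l ×ˢ Finset.range l)).card by
        rw [Finset.card_product, Finset.card_product, Finset.card_range]; ring]
  apply Finset.card_bij' (fun AB _ => ((AB.1 % l^p, AB.2 % l^p), (AB.1 / l^p, AB.2 / l^p)))
    (fun x _ => (x.1.1 + x.2.1 * l^p, x.1.2 + x.2.2 * l^p))
  · rintro ⟨A, B⟩ hAB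
    simp only [Finset.mem_filter, Finset.mem_product, Finset.mem_range] at hAB ⊢
    obtain ⟨⟨hA, hB⟩, hc, hd⟩ := hAB
    refine ⟨⟨⟨Nat.mod_lt _ hlp, Nat.mod_lt _ hlp⟩, ?_, (hmodiff A B).mpr hd⟩, ?_, ?_⟩
    · rw [Nat.dvd_mod_iff hdvd_lp, Nat.dvd_mod_iff hdvd_lp]; exact hc
    · rw [Nat.div_lt_iff_lt_mul hlp, mul_comm, ← pow_succ]
      exact hA
    · rw [Nat.div_lt_iff_lt_mul hlp, mul_comm, ← pow_succ]
      exact hB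
  · rintro ⟨⟨a, b⟩, s, t⟩ h
    simp only [Finset.mem_filter, Finset.mem_product, Finset.mem_range] at h ⊢
    obtain ⟨⟨⟨ha, hb⟩, hc, hd⟩, hs, ht⟩ := h
    have hbound : ∀ c i : ℕ, c < l^p → i < l → c + i * l^p < l^(p+1) := by
      intro c i hcb hib
      calc c + i * l^p < l^p + i * l^p := by omega
        _ ≤ l^p + (l-1) * l^p := by
            have : i ≤ l - 1 := by omega
            exact Nat.add_le_add_left (Nat.mul_le_mul_right _ this) _
        _ = l * l^p := by
            have h1 : 1 ≤ l := hl.one_lt.le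
            have : 1 * l^p + (l-1) * l^p = l * l^p := by
              rw [← Nat.add_mul]; congr 1; omega
            omega
        _ = l^(p+1) := by rw [pow_succ, mul_comm]
    refine ⟨⟨hbound a s ha hs, hbound b t hb ht⟩, ?_, ?_⟩
    · have hdvd_add : ∀ c i : ℕ, (l ∣ c + i * l^p ↔ l ∣ c) := by
        intro c i
        constructor
        · intro h
          have := Nat.dvd_sub h (hdvd_lp.mul_left i)
          simpa using this
        · exact fun h => h.add (hdvd_lp.mul_left i)
      rw [hdvd_add, hdvd_add]
      exact hc
    · rw [← hmodiff]
      rwa [Nat.add_mul_mod_self_right, Nat.add_mul_mod_self_right,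
        Nat.mod_eq_of_lt ha, Nat.mod_eq_of_lt hb]
  · rintro ⟨A, B⟩ _
    simp [Nat.mod_add_div']
  · rintro ⟨⟨a, b⟩, s, t⟩ h
    simp only [Finset.mem_filter, Finset.mem_product, Finset.mem_range] at h
    obtain ⟨⟨⟨ha, hb⟩, -, -⟩, hs, ht⟩ := h
    simp [Nat.add_mul_mod_self_right, Nat.mod_eq_of_lt ha, Nat.mod_eq_of_lt hb,
      Nat.add_mul_div_right _ _ hlp, Nat.div_eq_of_lt ha, Nat.div_eq_of_lt hb]

/-- For primes `p ≥ 5` and `l ≠ p`, `l ≥ 5`, the number of residue pairs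
`(A, B)` modulo `l^(p+1)` such that `(A, B) mod l ≠ (0, 0)`, `l^p ∣ 4A³ + 27B²` and
`l^(p+1) ∤ 4A³ + 27B²` equals `l^p (l − 1)²`. -/
theorem card_kodaira_Ip_residues (p l : ℕ) (hp : p.Prime) (hl : l.Prime)
    (hp5 : 5 ≤ p) (hl5 : 5 ≤ l) (hlp : l ≠ p) :
    ((Finset.range (l ^ (p + 1)) ×ˢ Finset.range (l ^ (p + 1))).filter fun AB =>
      ¬ (l ∣ AB.1 ∧ l ∣ AB.2) ∧ l ^ p ∣ (4 * AB.1 ^ 3 + 27 * AB.2 ^ 2) ∧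
        ¬ l ^ (p + 1) ∣ (4 * AB.1 ^ 3 + 27 * AB.2 ^ 2)).card
      = l ^ p * (l - 1) ^ 2 := by
  have hp0 : 0 < p := by omega
  set S := ((Finset.range (l ^ (p+1)) ×ˢ Finset.range (l ^ (p+1))).filter fun AB =>
      ¬ (l ∣ AB.1 ∧ l ∣ AB.2) ∧ l ^ p ∣ (4 * AB.1 ^ 3 + 27 * AB.2 ^ 2)) with hS_def
  have hsplit : ((Finset.range (l ^ (p + 1)) ×ˢ Finset.range (l ^ (p + 1))).filter fun AB =>
      ¬ (l ∣ AB.1 ∧ l ∣ AB.2) ∧ l ^ p ∣ (4 * AB.1 ^ 3 + 27 * AB.2 ^ 2) ∧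
        ¬ l ^ (p + 1) ∣ (4 * AB.1 ^ 3 + 27 * AB.2 ^ 2))
      = S.filter (fun AB => ¬ l ^ (p + 1) ∣ (4 * AB.1 ^ 3 + 27 * AB.2 ^ 2)) := by
    rw [hS_def, Finset.filter_filter]
    apply Finset.filter_congr
    intro x _
    tauto
  have hCeq : S.filter (fun AB => l ^ (p + 1) ∣ (4 * AB.1 ^ 3 + 27 * AB.2 ^ 2))
      = ((Finset.range (l ^ (p+1)) ×ˢ Finset.range (l ^ (p+1))).filter fun AB =>
        ¬ (l ∣ AB.1 ∧ l ∣ AB.2) ∧ l ^ (p+1) ∣ (4 * AB.1 ^ 3 + 27 * AB.2 ^ 2)) := by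
    rw [hS_def, Finset.filter_filter]
    apply Finset.filter_congr
    intro x _
    have hpp : l ^ p ∣ l ^ (p+1) := pow_dvd_pow l (by omega)
    constructor
    · rintro ⟨⟨h1, -⟩, h2⟩; exact ⟨h1, h2⟩
    · rintro ⟨h1, h2⟩; exact ⟨⟨h1, hpp.trans h2⟩, h2⟩
  have hkey := Finset.card_filter_add_card_filter_not
    (s := S) (p := fun AB => l ^ (p + 1) ∣ (4 * AB.1 ^ 3 + 27 * AB.2 ^ 2))
  rw [hsplit]
  have hS : S.card = l ^ 2 * (l ^ (p-1) * (l-1)) := by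
    rw [hS_def, countB p l hl hp0, countA l p hl hl5 hp0]
  have hC : (S.filter (fun AB => l ^ (p + 1) ∣ (4 * AB.1 ^ 3 + 27 * AB.2 ^ 2))).card
      = l ^ p * (l - 1) := by
    rw [hCeq]
    have := countA l (p+1) hl hl5 (by omega)
    simpa using this
  have harith : l ^ p * (l - 1) + l ^ p * (l - 1) ^ 2 = l ^ 2 * (l ^ (p-1) * (l-1)) := by
    obtain ⟨p', rfl⟩ : ∃ p', p = p' + 1 := ⟨p - 1, by omega⟩
    obtain ⟨l', rfl⟩ : ∃ l', l = l' + 1 := ⟨l - 1, by omega⟩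
    simp only [Nat.add_sub_cancel]
    ring
  rw [hS, hC] at hkey
  omega
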